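/- Let p be a prime with p ∤ f(0), let d be a positive integer with gcd(d, p) = 1, and let x ≥ 1 be real. Then |#{n ∈ ℤ : x < n ≤ 2x, p | f(n) and d | n·f(n)} − x·ν₁(p)·ν₂(d)/(pd)| ≤ ν₁(p)·ν₂(d). -/

import Mathlib

open Polynomial

/-- ν₁(d) = #{a mod d : gcd(a,d) = 1 and f(a) ≡ 0 (mod d)} -/
def nu1 (f : Polynomial ℤ) (d : ℕ) : ℕ :=
  ((Finset.range d).filter (fun a : ℕ => Nat.gcd a d = 1 ∧ (d : ℤ) ∣ f.eval (a : ℤ))).card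

/-- ν₂(d) = #{a mod d : a·f(a) ≡ 0 (mod d)} -/
def nu2 (f : Polynomial ℤ) (d : ℕ) : ℕ :=
  ((Finset.range d).filter (fun a : ℕ => (d : ℤ) ∣ (a : ℤ) * f.eval (a : ℤ))).card

lemma dvd_eval_trans (g : Polynomial ℤ) {q m n : ℤ} (hq : q ∣ m - n) (h : q ∣ g.eval n) :
    q ∣ g.eval m := by
  have h2 : q ∣ g.eval m - g.eval n := dvd_trans hq (Polynomial.sub_dvd_eval_sub m n g)
  simpa using dvd_add h2 h

lemma emod_sub_dvd (q n : ℤ) : q ∣ n % q - n := by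
  refine ⟨-(n / q), ?_⟩
  rw [mul_neg]
  linarith [Int.mul_ediv_add_emod n q]

lemma crt_card (f : Polynomial ℤ) (p d : ℕ) (hp : p.Prime)
    (hpf : ¬ ((p : ℤ) ∣ f.coeff 0)) (hd : 0 < d) (hcop : Nat.Coprime d p) :
    ((Finset.Ico (0:ℤ) ((p*d : ℕ) : ℤ)).filter
      (fun n => (p:ℤ) ∣ f.eval n ∧ (d:ℤ) ∣ n * f.eval n)).card = nu1 f p * nu2 f d := by
  classical
  rw [nu1, nu2, ← Finset.card_product]
  have hp0 : (0:ℤ) < (p:ℤ) := by exact_mod_cast hp.pos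
  have hd0 : (0:ℤ) < (d:ℤ) := by exact_mod_cast hd
  have hM0 : (0:ℤ) < ((p*d : ℕ) : ℤ) := by exact_mod_cast Nat.mul_pos hp.pos hd
  set g : Polynomial ℤ := X * f with hg
  have hge : ∀ m : ℤ, g.eval m = m * f.eval m := by intro m; simp [hg]
  have hnotdvd : ∀ n : ℤ, (p:ℤ) ∣ f.eval n → ¬ (p:ℤ) ∣ n := by
    intro n hfn hpn
    apply hpf
    rw [Polynomial.coeff_zero_eq_eval_zero]
    exact dvd_eval_trans f (by simpa using hpn.neg_right) hfn
  apply Finset.card_bij (fun n _ => ((n % (p:ℤ)).toNat, (n % (d:ℤ)).toNat))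
  · -- maps into
    intro n hn
    simp only [Finset.mem_filter, Finset.mem_Ico] at hn
    obtain ⟨⟨hn0, hnM⟩, hfp, hfd⟩ := hn
    simp only [Finset.mem_product, Finset.mem_filter, Finset.mem_range]
    have hmp0 : 0 ≤ n % (p:ℤ) := Int.emod_nonneg n hp0.ne'
    have hmd0 : 0 ≤ n % (d:ℤ) := Int.emod_nonneg n hd0.ne'
    have hmp : ((n % (p:ℤ)).toNat : ℤ) = n % (p:ℤ) := Int.toNat_of_nonneg hmp0
    have hmd : ((n % (d:ℤ)).toNat : ℤ) = n % (d:ℤ) := Int.toNat_of_nonneg hmd0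
    have hdvdp : (p:ℤ) ∣ (((n % (p:ℤ)).toNat : ℤ)) - n := by
      rw [hmp]; exact emod_sub_dvd _ _
    have hdvdd : (d:ℤ) ∣ (((n % (d:ℤ)).toNat : ℤ)) - n := by
      rw [hmd]; exact emod_sub_dvd _ _
    have hfp' : (p:ℤ) ∣ f.eval ((n % (p:ℤ)).toNat : ℤ) := dvd_eval_trans f hdvdp hfp
    refine ⟨⟨?_, ?_, hfp'⟩, ?_, ?_⟩
    · have := Int.emod_lt_of_pos n hp0; omega
    · have hnd : ¬ (p:ℤ) ∣ ((n % (p:ℤ)).toNat : ℤ) := hnotdvd _ hfp'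
      have h2 : ¬ (p ∣ (n % (p:ℤ)).toNat) := fun h => hnd (Int.natCast_dvd_natCast.mpr h)
      exact Nat.Coprime.symm ((Nat.Prime.coprime_iff_not_dvd hp).mpr h2)
    · have := Int.emod_lt_of_pos n hd0; omega
    · have : (d:ℤ) ∣ g.eval ((n % (d:ℤ)).toNat : ℤ) :=
        dvd_eval_trans g hdvdd (by rw [hge]; exact hfd)
      rwa [hge] at this
  · -- injectivity
    intro n₁ h₁ n₂ h₂ heq
    simp only [Finset.mem_filter, Finset.mem_Ico] at h₁ h₂
    have e1' := congrArg Prod.fst heq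
    have e2' := congrArg Prod.snd heq
    simp only at e1' e2'
    have hmp1 : 0 ≤ n₁ % (p:ℤ) := Int.emod_nonneg n₁ hp0.ne'
    have hmp2 : 0 ≤ n₂ % (p:ℤ) := Int.emod_nonneg n₂ hp0.ne'
    have hmd1 : 0 ≤ n₁ % (d:ℤ) := Int.emod_nonneg n₁ hd0.ne'
    have hmd2 : 0 ≤ n₂ % (d:ℤ) := Int.emod_nonneg n₂ hd0.ne'
    have e1 : n₁ % (p:ℤ) = n₂ % (p:ℤ) := by omega
    have e2 : n₁ % (d:ℤ) = n₂ % (d:ℤ) := by omega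
    have dp : (p:ℤ) ∣ n₁ - n₂ := by
      have h1 := emod_sub_dvd (p:ℤ) n₁
      have h2 := emod_sub_dvd (p:ℤ) n₂
      have h4 : n₁ - n₂ = (n₂ % (p:ℤ) - n₂) - (n₁ % (p:ℤ) - n₁) := by rw [e1]; ring
      rw [h4]; exact dvd_sub h2 h1
    have dd : (d:ℤ) ∣ n₁ - n₂ := by
      have h1 := emod_sub_dvd (d:ℤ) n₁
      have h2 := emod_sub_dvd (d:ℤ) n₂
      have h4 : n₁ - n₂ = (n₂ % (d:ℤ) - n₂) - (n₁ % (d:ℤ) - n₁) := by rw [e2]; ring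
      rw [h4]; exact dvd_sub h2 h1
    have hco : IsCoprime (p:ℤ) (d:ℤ) := by
      rw [Int.isCoprime_iff_gcd_eq_one, Int.gcd_natCast_natCast]
      exact hcop.symm
    have hdvd : ((p*d : ℕ):ℤ) ∣ n₁ - n₂ := by
      push_cast; exact hco.mul_dvd dp dd
    have : n₁ - n₂ = 0 := by
      apply Int.eq_zero_of_abs_lt_dvd hdvd
      rw [abs_lt]
      constructor <;> linarith [h₁.1.1, h₁.1.2, h₂.1.1, h₂.1.2]
    linarith
  · -- surjectivity
    rintro ⟨a, b⟩ hab
    simp only [Finset.mem_product, Finset.mem_filter, Finset.mem_range] at hab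
    obtain ⟨⟨hap, hgcd, hfa⟩, hbd, hfb⟩ := hab
    obtain ⟨k, hk1, hk2⟩ := Nat.chineseRemainder hcop.symm a b
    set M : ℤ := ((p*d : ℕ) : ℤ) with hMdef
    have hMp : (p:ℤ) ∣ M := by rw [hMdef]; push_cast; exact dvd_mul_right _ _
    have hMd : (d:ℤ) ∣ M := by rw [hMdef]; push_cast; exact dvd_mul_left _ _
    have hka : (p:ℤ) ∣ ((k:ℤ) % M) - (a:ℤ) := by
      have h1 : (p:ℤ) ∣ ((k:ℤ) % M) - (k:ℤ) := dvd_trans hMp (emod_sub_dvd M k)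
      have h2 : (p:ℤ) ∣ (a:ℤ) - (k:ℤ) := hk1.dvd
      have h4 : ((k:ℤ) % M) - (a:ℤ) = (((k:ℤ) % M) - (k:ℤ)) - ((a:ℤ) - (k:ℤ)) := by ring
      rw [h4]; exact dvd_sub h1 h2
    have hkb : (d:ℤ) ∣ ((k:ℤ) % M) - (b:ℤ) := by
      have h1 : (d:ℤ) ∣ ((k:ℤ) % M) - (k:ℤ) := dvd_trans hMd (emod_sub_dvd M k)
      have h2 : (d:ℤ) ∣ (b:ℤ) - (k:ℤ) := hk2.dvd
      have h4 : ((k:ℤ) % M) - (b:ℤ) = (((k:ℤ) % M) - (k:ℤ)) - ((b:ℤ) - (k:ℤ)) := by ring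
      rw [h4]; exact dvd_sub h1 h2
    refine ⟨(k:ℤ) % M, ?_, ?_⟩
    · simp only [Finset.mem_filter, Finset.mem_Ico]
      refine ⟨⟨Int.emod_nonneg _ hM0.ne', Int.emod_lt_of_pos _ hM0⟩, ?_, ?_⟩
      · exact dvd_eval_trans f hka hfa
      · have : (d:ℤ) ∣ g.eval ((k:ℤ) % M) :=
          dvd_eval_trans g hkb (by rw [hge]; exact hfb)
        rwa [hge] at this
    · have hp1 : ((k:ℤ) % M) % (p:ℤ) = (a:ℤ) := by
        rw [Int.emod_emod_of_dvd _ hMp]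
        have : (k:ℤ) % (p:ℤ) = ((k % p : ℕ) : ℤ) := by push_cast; ring
        rw [this, hk1, Nat.mod_eq_of_lt hap]
      have hp2 : ((k:ℤ) % M) % (d:ℤ) = (b:ℤ) := by
        rw [Int.emod_emod_of_dvd _ hMd]
        have : (k:ℤ) % (d:ℤ) = ((k % d : ℕ) : ℤ) := by push_cast; ring
        rw [this, hk2, Nat.mod_eq_of_lt hbd]
      rw [hp1, hp2]
      simp

theorem count_in_interval (f : Polynomial ℤ) (hconst : f.coeff 0 ≠ 0)
    (p : ℕ) (hp : p.Prime) (hpf : ¬ ((p : ℤ) ∣ f.coeff 0))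
    (d : ℕ) (hd : 0 < d) (hcop : Nat.Coprime d p) (x : ℝ) (hx : 1 ≤ x) :
    |(((Finset.Ioc ⌊x⌋ ⌊2 * x⌋).filter
        (fun n : ℤ => (p : ℤ) ∣ f.eval n ∧ (d : ℤ) ∣ n * f.eval n)).card : ℝ) -
      x * (nu1 f p : ℝ) * (nu2 f d : ℝ) / ((p : ℝ) * (d : ℝ))| ≤
      (nu1 f p : ℝ) * (nu2 f d : ℝ) := by
  set M : ℤ := ((p*d : ℕ) : ℤ) with hMdef
  have hM0 : (0:ℤ) < M := by rw [hMdef]; exact_mod_cast Nat.mul_pos hp.pos hd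
  have hMR : (0:ℝ) < (M:ℝ) := by exact_mod_cast hM0
  set g : Polynomial ℤ := X * f with hg
  have hge : ∀ m : ℤ, g.eval m = m * f.eval m := by intro m; simp [hg]
  set P : ℤ → Prop := fun n => (p:ℤ) ∣ f.eval n ∧ (d:ℤ) ∣ n * f.eval n with hP
  have hMp : (p:ℤ) ∣ M := by rw [hMdef]; push_cast; exact dvd_mul_right _ _
  have hMd : (d:ℤ) ∣ M := by rw [hMdef]; push_cast; exact dvd_mul_left _ _
  have hper : ∀ m n : ℤ, M ∣ m - n → P n → P m := by
    rintro m n hmn ⟨h1, h2⟩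
    refine ⟨dvd_eval_trans f (dvd_trans hMp hmn) h1, ?_⟩
    have : (d:ℤ) ∣ g.eval m := dvd_eval_trans g (dvd_trans hMd hmn) (by rw [hge]; exact h2)
    rwa [hge] at this
  set S : Finset ℤ := (Finset.Ico (0:ℤ) M).filter P with hS
  set T : Finset ℤ := (Finset.Ioc ⌊x⌋ ⌊2*x⌋).filter P with hT
  have hSca : S.card = nu1 f p * nu2 f d := by
    rw [hS]; simp only [hP, hMdef]; exact crt_card f p d hp hpf hd hcop
  -- fiberwise count
  have hfib : T.card = ∑ v ∈ S, (T.filter (fun n => n % M = v)).card := by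
    apply Finset.card_eq_sum_card_fiberwise
    intro n hn
    rw [Finset.mem_coe] at hn ⊢
    rw [hT, Finset.mem_filter] at hn
    rw [hS, Finset.mem_filter, Finset.mem_Ico]
    exact ⟨⟨Int.emod_nonneg _ hM0.ne', Int.emod_lt_of_pos _ hM0⟩,
      hper (n % M) n (emod_sub_dvd M n) hn.2⟩
  -- per-fiber bound
  have key : ∀ v ∈ S, |((T.filter (fun n => n % M = v)).card : ℝ) - x / (M:ℝ)| ≤ 1 := by
    intro v hv
    rw [hS, Finset.mem_filter, Finset.mem_Ico] at hv
    obtain ⟨⟨hv0, hvM⟩, hPv⟩ := hv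
    have hvmod : v % M = v := Int.emod_eq_of_lt hv0 hvM
    have hfil : T.filter (fun n => n % M = v) =
        (Finset.Ioc ⌊x⌋ ⌊2*x⌋).filter (fun n => n ≡ v [ZMOD M]) := by
      rw [hT, Finset.filter_filter]
      apply Finset.filter_congr
      intro n _
      constructor
      · rintro ⟨_, h⟩
        show n % M = v % M
        rw [h, hvmod]
      · intro h
        have hnv : n % M = v := by
          have : n % M = v % M := h
          rw [this, hvmod]
        exact ⟨hper _ _ (by rw [← hnv]; exact dvd_sub_comm.mp (emod_sub_dvd M n)) hPv, hnv⟩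
    have hle : (⌊x⌋ - v) / M ≤ (⌊2*x⌋ - v) / M :=
      Int.ediv_le_ediv hM0 (sub_le_sub_right (Int.floor_le_floor (by linarith)) v)
    set q1 : ℤ := (⌊x⌋ - v) / M with hq1
    set q2 : ℤ := (⌊2*x⌋ - v) / M with hq2
    set r1 : ℤ := (⌊x⌋ - v) % M with hr1
    set r2 : ℤ := (⌊2*x⌋ - v) % M with hr2
    have hflr : ∀ c : ℤ, ⌊((c:ℚ) - (v:ℚ)) / ((M:ℤ):ℚ)⌋ = (c - v) / M := by
      intro c
      have h1 : ((c:ℚ) - (v:ℚ)) = (((c - v : ℤ)):ℚ) := by push_cast; ring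
      have h2 : ((M:ℤ):ℚ) = (((p*d : ℕ)):ℚ) := by rw [hMdef]; push_cast; ring
      rw [h1, h2, Rat.floor_intCast_div_natCast, hMdef]
    have hcardv : ((T.filter (fun n => n % M = v)).card : ℤ) = q2 - q1 := by
      rw [hfil, Int.Ioc_filter_modEq_card _ _ hM0 v, hflr, hflr, ← hq1, ← hq2,
        max_eq_left (sub_nonneg.mpr hle)]
    have e1 : M * q1 + r1 = ⌊x⌋ - v := by rw [hq1, hr1]; exact Int.mul_ediv_add_emod _ _
    have e2 : M * q2 + r2 = ⌊2*x⌋ - v := by rw [hq2, hr2]; exact Int.mul_ediv_add_emod _ _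
    have hr10 : 0 ≤ r1 := by rw [hr1]; exact Int.emod_nonneg _ hM0.ne'
    have hr1M : r1 < M := by rw [hr1]; exact Int.emod_lt_of_pos _ hM0
    have hr20 : 0 ≤ r2 := by rw [hr2]; exact Int.emod_nonneg _ hM0.ne'
    have hr2M : r2 < M := by rw [hr2]; exact Int.emod_lt_of_pos _ hM0
    have E1 : (M:ℝ) * (q1:ℝ) + (r1:ℝ) = ((⌊x⌋:ℤ):ℝ) - (v:ℝ) := by exact_mod_cast e1
    have E2 : (M:ℝ) * (q2:ℝ) + (r2:ℝ) = ((⌊2*x⌋:ℤ):ℝ) - (v:ℝ) := by exact_mod_cast e2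
    have R10 : (0:ℝ) ≤ (r1:ℝ) := by exact_mod_cast hr10
    have R20 : (0:ℝ) ≤ (r2:ℝ) := by exact_mod_cast hr20
    have R1M' : (r1:ℝ) ≤ (M:ℝ) - 1 := by
      have : r1 ≤ M - 1 := by omega
      exact_mod_cast this
    have R2M' : (r2:ℝ) ≤ (M:ℝ) - 1 := by
      have : r2 ≤ M - 1 := by omega
      exact_mod_cast this
    have F1 : ((⌊x⌋:ℤ):ℝ) ≤ x := Int.floor_le x
    have F2 : x < ((⌊x⌋:ℤ):ℝ) + 1 := Int.lt_floor_add_one x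
    have F3 : ((⌊2*x⌋:ℤ):ℝ) ≤ 2*x := Int.floor_le _
    have F4 : 2*x < ((⌊2*x⌋:ℤ):ℝ) + 1 := Int.lt_floor_add_one _
    have hcv : ((T.filter (fun n => n % M = v)).card : ℝ) = (q2:ℝ) - (q1:ℝ) := by
      exact_mod_cast hcardv
    rw [hcv, abs_le]
    constructor
    · have hx1 : x ≤ ((q2:ℝ) - (q1:ℝ) + 1) * (M:ℝ) := by nlinarith
      have h5 := (div_le_iff₀ hMR).mpr hx1
      linarith
    · have hx2 : ((q2:ℝ) - (q1:ℝ) - 1) * (M:ℝ) ≤ x := by nlinarith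
      have h5 := (le_div_iff₀ hMR).mpr hx2
      linarith
  -- combine
  have hTsum : (T.card : ℝ) = ∑ v ∈ S, ((T.filter (fun n => n % M = v)).card : ℝ) := by
    exact_mod_cast hfib
  have h1 : (S.card : ℝ) * (x / (M:ℝ)) = ∑ _v ∈ S, x / (M:ℝ) := by
    rw [Finset.sum_const, nsmul_eq_mul]
  have habs : |(T.card : ℝ) - (S.card : ℝ) * (x / (M:ℝ))| ≤ (S.card : ℝ) := by
    rw [hTsum, h1, ← Finset.sum_sub_distrib]
    calc |∑ v ∈ S, (((T.filter (fun n => n % M = v)).card : ℝ) - x / (M:ℝ))|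
        ≤ ∑ v ∈ S, |((T.filter (fun n => n % M = v)).card : ℝ) - x / (M:ℝ)| :=
          Finset.abs_sum_le_sum_abs _ _
      _ ≤ ∑ _v ∈ S, (1:ℝ) := Finset.sum_le_sum key
      _ = (S.card : ℝ) := by simp
  have hMR' : (M:ℝ) = (p:ℝ) * (d:ℝ) := by rw [hMdef]; push_cast; ring
  have hScaR : (S.card : ℝ) = (nu1 f p : ℝ) * (nu2 f d : ℝ) := by exact_mod_cast hSca
  have heq : (S.card : ℝ) * (x / (M:ℝ)) =
      x * (nu1 f p : ℝ) * (nu2 f d : ℝ) / ((p:ℝ) * (d:ℝ)) := by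
    rw [hScaR, hMR']; ring
  rw [← heq, ← hScaR]
  exact habs
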